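/- arXiv:2510.05666 — 5 statements merged into one kernel-verified Lean document; each statement's English description precedes it below -/
import Mathlib

section
/- Let n, k be positive integers with 4 ≤ 2k ≤ n and let G, H ⊆ [n] with |G| ≤ k and |H| ≤ k. If there exists l ∈ [n] with μ_G(l) + μ_H(l) > l, then G and H are strongly intersecting, i.e., for all G' ≤ G and H' ≤ H (sets of the same sizes with elementwise order) we have G' ∩ H' ≠ ∅. -/
open Finset

/-- 1-indexed i-th smallest element of a finset of naturals (0 if out of range). -/
def nth (A : Finset ℕ) (i : ℕ) : ℕ := (A.sort (· ≤ ·)).getD (i - 1) 0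

/-- Elementwise order on finsets of equal size: `A ≤ B`. -/
def eLE (A B : Finset ℕ) : Prop :=
  A.card = B.card ∧ ∀ i, 1 ≤ i → i ≤ B.card → nth A i ≤ nth B i

/-- `A ⪯ B`: `|A| ≥ |B|` and the i-th smallest of `A` is ≤ the i-th smallest of `B` for `i ≤ |B|`. -/
def preceq (A B : Finset ℕ) : Prop :=
  B.card ≤ A.card ∧ ∀ i, 1 ≤ i → i ≤ B.card → nth A i ≤ nth B i

/-- `μ_X(l) = |X ∩ [l]|`. -/
def mu (X : Finset ℕ) (l : ℕ) : ℕ := (X ∩ Finset.Icc 1 l).card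

/-- `G ∼_si H` (within `[n]`): every `G' ≤ G` and `H' ≤ H` with `G', H' ⊆ [n]` intersect. -/
def sInt (n : ℕ) (G H : Finset ℕ) : Prop :=
  ∀ G' H' : Finset ℕ, G' ⊆ Finset.Icc 1 n → H' ⊆ Finset.Icc 1 n →
    eLE G' G → eLE H' H → (G' ∩ H').Nonempty

/-- `F(n,k,𝒢)`: the k-subsets `S` of `[n]` with `S ⪯ G` for some `G ∈ 𝒢`. -/
def Fam (n k : ℕ) (𝒢 : Set (Finset ℕ)) : Set (Finset ℕ) :=
  {S | S ⊆ Finset.Icc 1 n ∧ S.card = k ∧ ∃ G ∈ 𝒢, preceq S G}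

/-- A family is intersecting if every two members (possibly equal) intersect. -/
def IsIntersecting (𝒜 : Set (Finset ℕ)) : Prop :=
  ∀ A ∈ 𝒜, ∀ B ∈ 𝒜, (A ∩ B).Nonempty

/-- The type of `G`: the largest `r` with `g_r < k + r`. -/
def typeOf (k : ℕ) (G : Finset ℕ) : ℕ :=
  ((Finset.range (G.card + 1)).filter fun r => 1 ≤ r ∧ nth G r < k + r).sup id

/-- `π(G) = {g_1, …, g_r}` where `r` is the type of `G`. -/
def piG (k : ℕ) (G : Finset ℕ) : Finset ℕ :=
  ((G.sort (· ≤ ·)).take (typeOf k G)).toFinset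

lemma sorted_getElem_le_iff (s : List ℕ) (hs : s.Pairwise (· ≤ ·)) (i : ℕ) (hi : i < s.length)
    (l : ℕ) : s[i] ≤ l ↔ i < s.countP (· ≤ l) := by
  constructor
  · intro h
    have : (s.take (i+1)).countP (· ≤ l) = (s.take (i+1)).length := by
      rw [List.countP_eq_length]
      intro a ha
      rw [List.mem_take_iff_getElem] at ha
      obtain ⟨j, hj, rfl⟩ := ha
      have hj' : j < s.length := lt_of_lt_of_le hj inf_le_right
      have : s[j] ≤ s[i] := hs.rel_get_of_le (a := ⟨j, hj'⟩) (b := ⟨i, hi⟩)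
        (by simpa using Nat.lt_succ_iff.mp (lt_of_lt_of_le hj inf_le_left))
      simpa using le_trans this h
    calc i < (s.take (i+1)).length := by rw [List.length_take]; omega
      _ = (s.take (i+1)).countP (· ≤ l) := this.symm
      _ ≤ s.countP (· ≤ l) := by
          conv_rhs => rw [← List.take_append_drop (i+1) s]
          rw [List.countP_append]; omega
  · intro h
    by_contra hc
    push_neg at hc
    have hz : (s.drop i).countP (· ≤ l) = 0 := by
      rw [List.countP_eq_zero]
      intro a ha
      rw [List.mem_drop_iff_getElem] at ha
      obtain ⟨j, hj, rfl⟩ := ha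
      have : s[i] ≤ s[i+j] := hs.rel_get_of_le (a := ⟨i, hi⟩) (b := ⟨i+j, by omega⟩) (by simp)
      simp only [decide_eq_true_eq]
      omega
    have : s.countP (· ≤ l) ≤ i := by
      conv_lhs => rw [← List.take_append_drop i s]
      rw [List.countP_append, hz]
      have := List.length_take (i := i) (l := s)
      have := List.countP_le_length (p := fun x => decide (x ≤ l)) (l := s.take i)
      omega
    omega

lemma mu_eq_countP (X : Finset ℕ) (hX : ∀ x ∈ X, 1 ≤ x) (l : ℕ) :
    mu X l = (X.sort (· ≤ ·)).countP (· ≤ l) := by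
  have h1 : X ∩ Finset.Icc 1 l = X.filter (· ≤ l) := by
    ext x
    simp only [Finset.mem_inter, Finset.mem_Icc, Finset.mem_filter]
    exact ⟨fun ⟨hx, _, h2⟩ => ⟨hx, h2⟩, fun ⟨hx, h2⟩ => ⟨hx, hX x hx, h2⟩⟩
  rw [mu, h1, ← Multiset.coe_countP,
    show Finset.sort X (· ≤ ·) = Multiset.sort X.1 (· ≤ ·) from rfl,
    Multiset.sort_eq, Multiset.countP_eq_card_filter]
  rfl

lemma mu_mono (A B : Finset ℕ) (hA : ∀ x ∈ A, 1 ≤ x) (hB : ∀ x ∈ B, 1 ≤ x)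
    (h : eLE A B) (l : ℕ) : mu B l ≤ mu A l := by
  set m := mu B l with hm
  rcases Nat.eq_zero_or_pos m with h0 | h0
  · omega
  have hmB : m ≤ B.card := by
    rw [hm, mu]
    exact Finset.card_le_card Finset.inter_subset_left
  have hcard : A.card = B.card := h.1
  have hlB : (B.sort (· ≤ ·)).length = B.card := Finset.length_sort _
  have hlA : (A.sort (· ≤ ·)).length = A.card := Finset.length_sort _
  have hiB : m - 1 < (B.sort (· ≤ ·)).length := by omega
  have hiA : m - 1 < (A.sort (· ≤ ·)).length := by omega
  have hBm : nth B m ≤ l := by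
    rw [nth, List.getD_eq_getElem _ _ hiB]
    rw [sorted_getElem_le_iff _ (Finset.pairwise_sort _ _) _ hiB, ← mu_eq_countP B hB]
    omega
  have hAm : nth A m ≤ l := le_trans (h.2 m h0 hmB) hBm
  rw [nth, List.getD_eq_getElem _ _ hiA,
    sorted_getElem_le_iff _ (Finset.pairwise_sort _ _) _ hiA, ← mu_eq_countP A hA] at hAm
  omega

theorem stmt4 (n k : ℕ) (h4 : 4 ≤ 2 * k) (hn : 2 * k ≤ n) (G H : Finset ℕ)
    (hG : G ⊆ Finset.Icc 1 n) (hH : H ⊆ Finset.Icc 1 n)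
    (hGc : G.card ≤ k) (hHc : H.card ≤ k)
    (h : ∃ l ∈ Finset.Icc 1 n, l < mu G l + mu H l) : sInt n G H := by
  intro G' H' hG' hH' hGe hHe
  obtain ⟨l, _, hlt⟩ := h
  have pos : ∀ (X : Finset ℕ), X ⊆ Finset.Icc 1 n → ∀ x ∈ X, 1 ≤ x :=
    fun X hX x hx => (Finset.mem_Icc.mp (hX hx)).1
  have h1 : mu G l ≤ mu G' l := mu_mono G' G (pos G' hG') (pos G hG) hGe l
  have h2 : mu H l ≤ mu H' l := mu_mono H' H (pos H' hH') (pos H hH) hHe l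
  have hU := Finset.card_union_add_card_inter (G' ∩ Finset.Icc 1 l) (H' ∩ Finset.Icc 1 l)
  have hsub : (G' ∩ Finset.Icc 1 l) ∪ (H' ∩ Finset.Icc 1 l) ⊆ Finset.Icc 1 l :=
    Finset.union_subset Finset.inter_subset_right Finset.inter_subset_right
  have hle : ((G' ∩ Finset.Icc 1 l) ∪ (H' ∩ Finset.Icc 1 l)).card ≤ l := by
    have := Finset.card_le_card hsub
    simpa [Nat.card_Icc] using this
  have hpos : 0 < ((G' ∩ Finset.Icc 1 l) ∩ (H' ∩ Finset.Icc 1 l)).card := by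
    have hg : mu G' l = (G' ∩ Finset.Icc 1 l).card := rfl
    have hh : mu H' l = (H' ∩ Finset.Icc 1 l).card := rfl
    omega
  obtain ⟨x, hx⟩ := Finset.card_pos.mp hpos
  exact ⟨x, Finset.mem_inter.mpr ⟨(Finset.mem_inter.mp (Finset.mem_inter.mp hx).1).1,
    (Finset.mem_inter.mp (Finset.mem_inter.mp hx).2).1⟩⟩
end

section
/- Let n, k be positive integers with 4 ≤ 2k ≤ n and let G, H ⊆ [n] with |G| ≤ k, |H| ≤ k. If the families F(G) and F(H) are cross-intersecting, then there exists l ∈ [n] such that μ_G(l) + μ_H(l) > l. -/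
open Finset

lemma nth_eq_getElem (X : Finset ℕ) (i : ℕ) (h1 : 1 ≤ i) (h2 : i ≤ X.card) :
    nth X i = (X.sort (· ≤ ·))[i-1]'(by rw [Finset.length_sort]; omega) := by
  rw [nth, List.getD_eq_getElem]

lemma nth_mem (X : Finset ℕ) (i : ℕ) (h1 : 1 ≤ i) (h2 : i ≤ X.card) : nth X i ∈ X := by
  rw [nth_eq_getElem X i h1 h2]
  exact (Finset.mem_sort _).1 (List.getElem_mem _)

lemma nth_strictMono (X : Finset ℕ) {i j : ℕ} (h1 : 1 ≤ i) (hij : i < j) (h2 : j ≤ X.card) :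
    nth X i < nth X j := by
  rw [nth_eq_getElem X i h1 (by omega), nth_eq_getElem X j (by omega) h2]
  exact List.pairwise_iff_getElem.mp (Finset.sortedLT_sort X).pairwise _ _ _ _ (by omega)

lemma le_mu_of_nth_le (X : Finset ℕ) (hX1 : ∀ x ∈ X, 1 ≤ x) {j l : ℕ}
    (h1 : 1 ≤ j) (h2 : j ≤ X.card) (h : nth X j ≤ l) : j ≤ mu X l := by
  classical
  set s := X.sort (· ≤ ·) with hs
  have hlen : s.length = X.card := Finset.length_sort _
  have htl : (s.take j).length = j := by rw [List.length_take]; omega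
  have hsub : (s.take j).toFinset ⊆ X ∩ Finset.Icc 1 l := by
    intro x hx
    rw [List.mem_toFinset] at hx
    obtain ⟨m, hm, hget⟩ := List.getElem_of_mem hx
    rw [List.getElem_take] at hget
    rw [htl] at hm
    have hxX : x ∈ X := by
      rw [← hget]; exact (Finset.mem_sort _).1 (List.getElem_mem _)
    have hle : x ≤ nth X j := by
      rw [nth_eq_getElem X j h1 h2, ← hget]
      rcases Nat.lt_or_ge m (j-1) with hm' | hm'
      · exact le_of_lt (List.pairwise_iff_getElem.mp (Finset.sortedLT_sort X).pairwise _ _ _ _ hm')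
      · have : m = j - 1 := by omega
        subst this; rfl
    exact Finset.mem_inter.2 ⟨hxX, Finset.mem_Icc.2 ⟨hX1 x hxX, le_trans hle h⟩⟩
  have hnd : (s.take j).Nodup := (Finset.sort_nodup _ _).sublist (List.take_sublist _ _)
  have := Finset.card_le_card hsub
  rwa [List.toFinset_card_of_nodup hnd, htl] at this

lemma nth_le_of_le_mu (X : Finset ℕ) {j l : ℕ}
    (h1 : 1 ≤ j) (h2 : j ≤ X.card) (h : j ≤ mu X l) : nth X j ≤ l := by
  classical
  by_contra hlt
  push_neg at hlt
  set s := X.sort (· ≤ ·) with hs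
  have hlen : s.length = X.card := Finset.length_sort _
  have htl : (s.take (j-1)).length = j - 1 := by rw [List.length_take]; omega
  have hsub : X ∩ Finset.Icc 1 l ⊆ (s.take (j-1)).toFinset := by
    intro x hx
    rw [Finset.mem_inter, Finset.mem_Icc] at hx
    obtain ⟨hxX, _, hxl⟩ := hx
    have hxs : x ∈ s := (Finset.mem_sort _).2 hxX
    obtain ⟨m, hm, hget⟩ := List.getElem_of_mem hxs
    have hmlt : m < j - 1 := by
      by_contra hge
      push_neg at hge
      have : nth X j ≤ x := by
        rw [nth_eq_getElem X j h1 h2, ← hget]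
        rcases Nat.lt_or_ge (j-1) m with hm' | hm'
        · exact le_of_lt (List.pairwise_iff_getElem.mp (Finset.sortedLT_sort X).pairwise _ _ _ _ hm')
        · have : j - 1 = m := by omega
          subst this; rfl
      omega
    rw [List.mem_toFinset]
    have : (s.take (j-1))[m]'(by omega) = x := by rw [List.getElem_take]; exact hget
    rw [← this]; exact List.getElem_mem _
  have := Finset.card_le_card hsub
  have h2' := (List.toFinset_card_le (s.take (j-1)))
  rw [htl] at h2'
  have : mu X l ≤ j - 1 := le_trans this h2'
  omega

lemma mu_mono_right (X : Finset ℕ) {l l' : ℕ} (h : l ≤ l') : mu X l ≤ mu X l' :=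
  Finset.card_le_card (Finset.inter_subset_inter_left (Finset.Icc_subset_Icc_right h))

lemma mu_mono_left {X Y : Finset ℕ} (h : X ⊆ Y) (l : ℕ) : mu X l ≤ mu Y l :=
  Finset.card_le_card (Finset.inter_subset_inter_right h)


theorem stmt5 (n k : ℕ) (h4 : 4 ≤ 2 * k) (hn : 2 * k ≤ n) (G H : Finset ℕ)
    (hG : G ⊆ Finset.Icc 1 n) (hH : H ⊆ Finset.Icc 1 n)
    (hGc : G.card ≤ k) (hHc : H.card ≤ k)
    (hcross : ∀ A ∈ Fam n k {G}, ∀ B ∈ Fam n k {H}, (A ∩ B).Nonempty) :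
    ∃ l ∈ Finset.Icc 1 n, l < mu G l + mu H l := by
  classical
  by_contra hcon
  push_neg at hcon
  have hG1 : ∀ x ∈ G, 1 ≤ x := fun x hx => (Finset.mem_Icc.1 (hG hx)).1
  have hH1 : ∀ x ∈ H, 1 ≤ x := fun x hx => (Finset.mem_Icc.1 (hH hx)).1
  have hmucard : ∀ X : Finset ℕ, ∀ l, mu X l ≤ X.card :=
    fun X l => Finset.card_le_card Finset.inter_subset_left
  have hall : ∀ l, mu G l + mu H l ≤ l := by
    intro l
    rcases Nat.lt_or_ge l 1 with h | h
    · have : l = 0 := by omega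
      subst this
      simp [mu]
    rcases le_or_gt l n with h' | h'
    · exact hcon l (Finset.mem_Icc.2 ⟨h, h'⟩)
    · have := hmucard G l; have := hmucard H l; omega
  set fA : ℕ → ℕ := fun i => i + mu H (nth G i - 1) with hfA
  set fB : ℕ → ℕ := fun j => j + mu G (nth H j) with hfB
  -- bounds
  have hgmem : ∀ i, 1 ≤ i → i ≤ G.card → 1 ≤ nth G i ∧ nth G i ≤ n := by
    intro i h1 h2
    have := hG (nth_mem G i h1 h2)
    exact Finset.mem_Icc.1 this
  have hhmem : ∀ j, 1 ≤ j → j ≤ H.card → 1 ≤ nth H j ∧ nth H j ≤ n := by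
    intro j h1 h2
    exact Finset.mem_Icc.1 (hH (nth_mem H j h1 h2))
  have hfA_le : ∀ i, 1 ≤ i → i ≤ G.card → fA i ≤ nth G i := by
    intro i h1 h2
    have hi : i ≤ mu G (nth G i) := le_mu_of_nth_le G hG1 h1 h2 le_rfl
    have := mu_mono_right H (Nat.sub_le (nth G i) 1)
    have := hall (nth G i)
    simp only [hfA]; omega
  have hfB_le : ∀ j, 1 ≤ j → j ≤ H.card → fB j ≤ nth H j := by
    intro j h1 h2
    have hj : j ≤ mu H (nth H j) := le_mu_of_nth_le H hH1 h1 h2 le_rfl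
    have := hall (nth H j)
    simp only [hfB]; omega
  -- monotonicity
  have hfA_mono : ∀ i i', 1 ≤ i → i ≤ i' → i' ≤ G.card → fA i ≤ fA i' ∧ (i < i' → fA i < fA i') := by
    intro i i' h1 hii h2
    have hg : nth G i ≤ nth G i' := by
      rcases Nat.lt_or_ge i i' with h | h
      · exact le_of_lt (nth_strictMono G h1 h h2)
      · have : i = i' := by omega
        subst this; exact le_rfl
    have := mu_mono_right H (Nat.sub_le_sub_right hg 1)
    constructor
    · simp only [hfA]; omega
    · intro _; simp only [hfA]; omega
  have hfB_mono : ∀ j j', 1 ≤ j → j ≤ j' → j' ≤ H.card → fB j ≤ fB j' ∧ (j < j' → fB j < fB j') := by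
    intro j j' h1 hjj h2
    have hg : nth H j ≤ nth H j' := by
      rcases Nat.lt_or_ge j j' with h | h
      · exact le_of_lt (nth_strictMono H h1 h h2)
      · have : j = j' := by omega
        subst this; exact le_rfl
    have := mu_mono_right G hg
    constructor
    · simp only [hfB]; omega
    · intro _; simp only [hfB]; omega
  set A : Finset ℕ := (Finset.Icc 1 G.card).image fA with hA
  set B : Finset ℕ := (Finset.Icc 1 H.card).image fB with hB
  have hAinj : Set.InjOn fA (Finset.Icc 1 G.card) := by
    intro i hi i' hi' he
    simp only [Finset.coe_Icc, Set.mem_Icc] at hi hi'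
    by_contra hne
    rcases Nat.lt_or_ge i i' with h | h
    · have := (hfA_mono i i' hi.1 (le_of_lt h) hi'.2).2 h; omega
    · have hlt : i' < i := by omega
      have := (hfA_mono i' i hi'.1 (le_of_lt hlt) hi.2).2 hlt; omega
  have hBinj : Set.InjOn fB (Finset.Icc 1 H.card) := by
    intro j hj j' hj' he
    simp only [Finset.coe_Icc, Set.mem_Icc] at hj hj'
    by_contra hne
    rcases Nat.lt_or_ge j j' with h | h
    · have := (hfB_mono j j' hj.1 (le_of_lt h) hj'.2).2 h; omega
    · have hlt : j' < j := by omega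
      have := (hfB_mono j' j hj'.1 (le_of_lt hlt) hj.2).2 hlt; omega
  have hAcard : A.card = G.card := by
    rw [hA, Finset.card_image_of_injOn hAinj, Nat.card_Icc]; omega
  have hBcard : B.card = H.card := by
    rw [hB, Finset.card_image_of_injOn hBinj, Nat.card_Icc]; omega
  have hAsub : A ⊆ Finset.Icc 1 n := by
    intro x hx
    rw [hA, Finset.mem_image] at hx
    obtain ⟨i, hi, rfl⟩ := hx
    rw [Finset.mem_Icc] at hi
    have := hfA_le i hi.1 hi.2
    have := (hgmem i hi.1 hi.2).2
    exact Finset.mem_Icc.2 ⟨by simp only [hfA]; omega, by omega⟩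
  have hBsub : B ⊆ Finset.Icc 1 n := by
    intro x hx
    rw [hB, Finset.mem_image] at hx
    obtain ⟨j, hj, rfl⟩ := hx
    rw [Finset.mem_Icc] at hj
    have := hfB_le j hj.1 hj.2
    have := (hhmem j hj.1 hj.2).2
    exact Finset.mem_Icc.2 ⟨by simp only [hfB]; omega, by omega⟩
  -- disjointness
  have hdisj : Disjoint A B := by
    rw [Finset.disjoint_left]
    intro x hxA hxB
    rw [hA, Finset.mem_image] at hxA
    rw [hB, Finset.mem_image] at hxB
    obtain ⟨i, hi, hieq⟩ := hxA
    obtain ⟨j, hj, hjeq⟩ := hxB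
    rw [Finset.mem_Icc] at hi hj
    have heq : fA i = fB j := by rw [hieq, hjeq]
    rcases le_or_gt (nth G i) (nth H j) with hgh | hgh
    · have h1 : i ≤ mu G (nth H j) := le_mu_of_nth_le G hG1 hi.1 hi.2 hgh
      have h2 : mu H (nth G i - 1) < j := by
        by_contra hge
        push_neg at hge
        have := nth_le_of_le_mu H hj.1 hj.2 hge
        have := (hgmem i hi.1 hi.2).1
        omega
      simp only [hfA, hfB] at heq
      omega
    · have h1 : j ≤ mu H (nth G i - 1) := by
        apply le_mu_of_nth_le H hH1 hj.1 hj.2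
        omega
      have h2 : mu G (nth H j) < i := by
        by_contra hge
        push_neg at hge
        have := nth_le_of_le_mu G hi.1 hi.2 hge
        omega
      simp only [hfA, hfB] at heq
      omega
  -- i ≤ mu A (nth G i)
  have hmuA : ∀ i, 1 ≤ i → i ≤ G.card → i ≤ mu A (nth G i) := by
    intro i h1 h2
    have hsub : (Finset.Icc 1 i).image fA ⊆ A ∩ Finset.Icc 1 (nth G i) := by
      intro x hx
      rw [Finset.mem_image] at hx
      obtain ⟨i', hi', rfl⟩ := hx
      rw [Finset.mem_Icc] at hi'
      refine Finset.mem_inter.2 ⟨?_, ?_⟩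
      · rw [hA, Finset.mem_image]
        exact ⟨i', Finset.mem_Icc.2 ⟨hi'.1, le_trans hi'.2 h2⟩, rfl⟩
      · have hm := (hfA_mono i' i hi'.1 hi'.2 h2).1
        have := hfA_le i h1 h2
        exact Finset.mem_Icc.2 ⟨by simp only [hfA]; omega, by omega⟩
    have hcard : ((Finset.Icc 1 i).image fA).card = i := by
      rw [Finset.card_image_of_injOn, Nat.card_Icc]
      · omega
      · intro a ha b hb he
        apply hAinj _ _ he <;>
          simp only [Finset.coe_Icc, Set.mem_Icc] at * <;> omega
    have := Finset.card_le_card hsub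
    rw [hcard] at this
    exact this
  have hmuB : ∀ j, 1 ≤ j → j ≤ H.card → j ≤ mu B (nth H j) := by
    intro j h1 h2
    have hsub : (Finset.Icc 1 j).image fB ⊆ B ∩ Finset.Icc 1 (nth H j) := by
      intro x hx
      rw [Finset.mem_image] at hx
      obtain ⟨j', hj', rfl⟩ := hx
      rw [Finset.mem_Icc] at hj'
      refine Finset.mem_inter.2 ⟨?_, ?_⟩
      · rw [hB, Finset.mem_image]
        exact ⟨j', Finset.mem_Icc.2 ⟨hj'.1, le_trans hj'.2 h2⟩, rfl⟩
      · have hm := (hfB_mono j' j hj'.1 hj'.2 h2).1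
        have := hfB_le j h1 h2
        exact Finset.mem_Icc.2 ⟨by simp only [hfB]; omega, by omega⟩
    have hcard : ((Finset.Icc 1 j).image fB).card = j := by
      rw [Finset.card_image_of_injOn, Nat.card_Icc]
      · omega
      · intro a ha b hb he
        apply hBinj _ _ he <;>
          simp only [Finset.coe_Icc, Set.mem_Icc] at * <;> omega
    have := Finset.card_le_card hsub
    rw [hcard] at this
    exact this
  -- extend A to Ak ⊆ Icc 1 n \ B with card k
  have hIccn : (Finset.Icc 1 n).card = n := by rw [Nat.card_Icc]; omega
  have hAsub' : A ⊆ Finset.Icc 1 n \ B := by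
    intro x hx
    exact Finset.mem_sdiff.2 ⟨hAsub hx, Finset.disjoint_left.1 hdisj hx⟩
  have hcard1 : k ≤ (Finset.Icc 1 n \ B).card := by
    rw [Finset.card_sdiff_of_subset hBsub, hIccn]
    omega
  obtain ⟨Ak, hAAk, hAkSub, hAkCard⟩ :=
    Finset.exists_subsuperset_card_eq hAsub' (by omega) hcard1
  have hAkIcc : Ak ⊆ Finset.Icc 1 n := fun x hx => (Finset.mem_sdiff.1 (hAkSub hx)).1
  have hBsub' : B ⊆ Finset.Icc 1 n \ Ak := by
    intro x hx
    refine Finset.mem_sdiff.2 ⟨hBsub hx, fun hc => ?_⟩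
    exact (Finset.mem_sdiff.1 (hAkSub hc)).2 hx
  have hcard2 : k ≤ (Finset.Icc 1 n \ Ak).card := by
    rw [Finset.card_sdiff_of_subset hAkIcc, hIccn, hAkCard]
    omega
  obtain ⟨Bk, hBBk, hBkSub, hBkCard⟩ :=
    Finset.exists_subsuperset_card_eq hBsub' (by omega) hcard2
  have hBkIcc : Bk ⊆ Finset.Icc 1 n := fun x hx => (Finset.mem_sdiff.1 (hBkSub hx)).1
  -- preceq
  have hnthAk : ∀ i, 1 ≤ i → i ≤ G.card → nth Ak i ≤ nth G i := by
    intro i h1 h2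
    apply nth_le_of_le_mu Ak h1 (by omega)
    exact le_trans (hmuA i h1 h2) (mu_mono_left hAAk _)
  have hnthBk : ∀ j, 1 ≤ j → j ≤ H.card → nth Bk j ≤ nth H j := by
    intro j h1 h2
    apply nth_le_of_le_mu Bk h1 (by omega)
    exact le_trans (hmuB j h1 h2) (mu_mono_left hBBk _)
  have hAkmem : Ak ∈ Fam n k {G} :=
    ⟨hAkIcc, hAkCard, G, rfl, by omega, hnthAk⟩
  have hBkmem : Bk ∈ Fam n k {H} :=
    ⟨hBkIcc, hBkCard, H, rfl, by omega, hnthBk⟩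
  obtain ⟨x, hx⟩ := hcross Ak hAkmem Bk hBkmem
  rw [Finset.mem_inter] at hx
  exact (Finset.mem_sdiff.1 (hBkSub hx.2)).2 hx.1
end

section
/- Let n, k be positive integers with 4 ≤ 2k ≤ n and G, H ⊆ [n] with |G| ≤ k, |H| ≤ k. Then the following are equivalent: (i) G and H are strongly intersecting; (ii) F(G) and F(H) are cross-intersecting; (iii) there exists l ∈ [n] with μ_G(l) + μ_H(l) > l. -/
open Finset

lemma sorted_getD_le_iff (l : ℕ) : ∀ (s : List ℕ), s.Pairwise (· ≤ ·) → ∀ j, j < s.length →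
    (s.getD j 0 ≤ l ↔ j < s.countP (fun x => decide (x ≤ l))) := by
  intro s
  induction s with
  | nil => intro _ j hj; simp at hj
  | cons a t ih =>
    intro hs j hj
    have hst : t.Pairwise (· ≤ ·) := hs.of_cons
    have ha : ∀ x ∈ t, a ≤ x := fun x hx => List.rel_of_pairwise_cons hs hx
    rw [List.countP_cons]
    by_cases hal : a ≤ l
    · match j with
      | 0 => simp [hal]
      | j+1 =>
        simp only [List.getD_cons_succ]
        have hj' : j < t.length := by simpa using hj
        rw [ih hst j hj']
        simp [hal]
    · have h0 : t.countP (fun x => decide (x ≤ l)) = 0 := by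
        rw [List.countP_eq_zero]
        intro x hx
        simp only [decide_eq_true_eq]
        exact fun hxl => hal (le_trans (ha x hx) hxl)
      match j with
      | 0 => simp [hal, h0]
      | j+1 =>
        simp only [List.getD_cons_succ]
        have hj' : j < t.length := by simpa using hj
        rw [ih hst j hj']
        simp [h0, hal]

lemma mu_eq_countP_s6 (A : Finset ℕ) (hA : ∀ x ∈ A, 1 ≤ x) (l : ℕ) :
    mu A l = (A.sort (· ≤ ·)).countP (fun x => decide (x ≤ l)) := by
  rw [List.countP_eq_length_filter]
  have hnd : ((A.sort (· ≤ ·)).filter (fun x => decide (x ≤ l))).Nodup :=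
    (Finset.sort_nodup _ _).filter _
  have hfil : ((A.sort (· ≤ ·)).filter (fun x => decide (x ≤ l))).toFinset
      = A ∩ Finset.Icc 1 l := by
    ext x
    simp only [List.mem_toFinset, List.mem_filter, Finset.mem_sort, Finset.mem_inter,
      Finset.mem_Icc, decide_eq_true_eq]
    constructor
    · rintro ⟨h1, h2⟩; exact ⟨h1, hA x h1, h2⟩
    · rintro ⟨h1, _, h2⟩; exact ⟨h1, h2⟩
  rw [mu, ← hfil, List.toFinset_card_of_nodup hnd]

lemma nth_le_iff {A : Finset ℕ} (hA : ∀ x ∈ A, 1 ≤ x) {i : ℕ} (h1 : 1 ≤ i) (h2 : i ≤ A.card)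
    (l : ℕ) : nth A i ≤ l ↔ i ≤ mu A l := by
  have hlen : (A.sort (· ≤ ·)).length = A.card := Finset.length_sort _
  have hj : i - 1 < (A.sort (· ≤ ·)).length := by omega
  rw [mu_eq_countP_s6 A hA l]
  unfold nth
  rw [sorted_getD_le_iff l _ (Finset.pairwise_sort _ _) (i-1) hj]
  omega

lemma mu_mono_l {A : Finset ℕ} {m l : ℕ} (h : m ≤ l) : mu A m ≤ mu A l :=
  Finset.card_le_card (Finset.inter_subset_inter (le_refl _) (Finset.Icc_subset_Icc le_rfl h))

lemma mu_le_card (A : Finset ℕ) (l : ℕ) : mu A l ≤ A.card :=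
  Finset.card_le_card Finset.inter_subset_left

lemma mu_subset {A B : Finset ℕ} (h : A ⊆ B) (l : ℕ) : mu A l ≤ mu B l :=
  Finset.card_le_card (Finset.inter_subset_inter h (le_refl _))

lemma mu_lt {A : Finset ℕ} {x m l : ℕ} (hx : x ∈ A) (h1 : 1 ≤ x) (hm : m < x) (hl : x ≤ l) :
    mu A m < mu A l := by
  have hsub : A ∩ Finset.Icc 1 m ⊆ A ∩ Finset.Icc 1 l :=
    Finset.inter_subset_inter (le_refl _) (Finset.Icc_subset_Icc le_rfl (by omega))
  refine Finset.card_lt_card ((Finset.ssubset_iff_of_subset hsub).2 ⟨x, ?_, ?_⟩)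
  · simp [Finset.mem_inter, Finset.mem_Icc, hx, h1, hl]
  · simp only [Finset.mem_inter, Finset.mem_Icc]
    rintro ⟨-, -, h⟩; omega

lemma mu_transfer {A G : Finset ℕ} (hA : ∀ x ∈ A, 1 ≤ x) (hG : ∀ x ∈ G, 1 ≤ x)
    (hcard : G.card ≤ A.card)
    (hnth : ∀ i, 1 ≤ i → i ≤ G.card → nth A i ≤ nth G i) (l : ℕ) :
    mu G l ≤ mu A l := by
  rcases Nat.eq_zero_or_pos (mu G l) with h0 | hm
  · omega
  · have hmG : mu G l ≤ G.card := mu_le_card G l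
    have h1 : nth G (mu G l) ≤ l := (nth_le_iff hG hm hmG l).2 le_rfl
    have h2 : nth A (mu G l) ≤ l := le_trans (hnth _ hm hmG) h1
    exact (nth_le_iff hA hm (le_trans hmG hcard) l).1 h2

lemma nth_transfer {A G : Finset ℕ} (hA : ∀ x ∈ A, 1 ≤ x) (hG : ∀ x ∈ G, 1 ≤ x)
    (hcard : G.card ≤ A.card) (hmu : ∀ l, mu G l ≤ mu A l) :
    ∀ i, 1 ≤ i → i ≤ G.card → nth A i ≤ nth G i := by
  intro i hi1 hi2
  have h1 : i ≤ mu G (nth G i) := (nth_le_iff hG hi1 hi2 _).1 le_rfl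
  exact (nth_le_iff hA hi1 (le_trans hi2 hcard) _).2 (le_trans h1 (hmu _))

lemma inter_nonempty_of_mu {A B : Finset ℕ} {l : ℕ} (h : l < mu A l + mu B l) :
    (A ∩ B).Nonempty := by
  have hcard : ((A ∩ Finset.Icc 1 l) ∪ (B ∩ Finset.Icc 1 l)).card ≤ l := by
    calc _ ≤ (Finset.Icc 1 l).card := Finset.card_le_card (by
            intro x hx
            rcases Finset.mem_union.1 hx with h' | h' <;> exact (Finset.mem_inter.1 h').2)
    _ = l := by rw [Nat.card_Icc]; omega
  have := Finset.card_inter_add_card_union (A ∩ Finset.Icc 1 l) (B ∩ Finset.Icc 1 l)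
  have hpos : 0 < ((A ∩ Finset.Icc 1 l) ∩ (B ∩ Finset.Icc 1 l)).card := by
    unfold mu at h; omega
  obtain ⟨x, hx⟩ := Finset.card_pos.1 hpos
  simp only [Finset.mem_inter] at hx
  exact ⟨x, Finset.mem_inter.2 ⟨hx.1.1, hx.2.1⟩⟩

lemma pos_of_subset_Icc {A : Finset ℕ} {n : ℕ} (h : A ⊆ Finset.Icc 1 n) :
    ∀ x ∈ A, 1 ≤ x := fun x hx => (Finset.mem_Icc.1 (h hx)).1

lemma construct (n : ℕ) (G H : Finset ℕ) (hG : G ⊆ Finset.Icc 1 n) (hH : H ⊆ Finset.Icc 1 n)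
    (hmu : ∀ l ∈ Finset.Icc 1 n, mu G l + mu H l ≤ l) :
    ∃ G' H' : Finset ℕ, G' ⊆ Finset.Icc 1 (G.card + H.card) ∧
      H' ⊆ Finset.Icc 1 (G.card + H.card) ∧
      G'.card = G.card ∧ H'.card = H.card ∧
      (∀ l, mu G l ≤ mu G' l) ∧ (∀ l, mu H l ≤ mu H' l) ∧
      G' ∩ H' = ∅ ∧ G.card + H.card ≤ n := by
  have hGpos := pos_of_subset_Icc hG
  have hHpos := pos_of_subset_Icc hH
  set rG : ℕ → ℕ := fun x => mu G x + mu H (x - 1) with hrG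
  set rH : ℕ → ℕ := fun x => mu G x + mu H x with hrH
  -- basic bounds
  have hGn : ∀ x ∈ G, x ∈ Finset.Icc 1 n := fun x hx => hG hx
  have hHn : ∀ x ∈ H, x ∈ Finset.Icc 1 n := fun x hx => hH hx
  have hrG_le : ∀ x ∈ G, rG x ≤ x := by
    intro x hx
    have := hmu x (hGn x hx)
    have : mu H (x-1) ≤ mu H x := mu_mono_l (by omega)
    have := hmu x (hGn x hx)
    simp only [hrG]
    omega
  have hrH_le : ∀ x ∈ H, rH x ≤ x := fun x hx => hmu x (hHn x hx)
  have hrG_pos : ∀ x ∈ G, 1 ≤ rG x := by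
    intro x hx
    have : 0 < mu G x := by
      have := mu_lt (A := G) hx (hGpos x hx) (m := 0) (hGpos x hx) le_rfl
      have h0 : mu G 0 = 0 := by simp [mu]
      omega
    simp only [hrG]; omega
  have hrH_pos : ∀ x ∈ H, 1 ≤ rH x := by
    intro x hx
    have : 0 < mu H x := by
      have := mu_lt (A := H) hx (hHpos x hx) (m := 0) (hHpos x hx) le_rfl
      have h0 : mu H 0 = 0 := by simp [mu]
      omega
    simp only [hrH]; omega
  have hrG_bd : ∀ x ∈ G, rG x ≤ G.card + H.card := by
    intro x hx
    have h1 : mu G x ≤ G.card := mu_le_card _ _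
    have h2 : mu H (x-1) ≤ H.card := mu_le_card _ _
    show mu G x + mu H (x-1) ≤ G.card + H.card
    omega
  have hrH_bd : ∀ x ∈ H, rH x ≤ G.card + H.card := by
    intro x hx
    have h1 : mu G x ≤ G.card := mu_le_card _ _
    have h2 : mu H x ≤ H.card := mu_le_card _ _
    show mu G x + mu H x ≤ G.card + H.card
    omega
  -- injectivity
  have hGinj : Set.InjOn rG ↑G := by
    intro x hx y hy hxy
    simp only [Finset.coe_mem, Finset.mem_coe] at hx hy
    by_contra hne
    rcases Nat.lt_or_ge x y with h | h
    · have h1 : mu G x < mu G y := mu_lt hy (hGpos y hy) h le_rfl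
      have h2 : mu H (x-1) ≤ mu H (y-1) := mu_mono_l (by omega)
      simp only [hrG] at hxy; omega
    · have h' : y < x := by omega
      have h1 : mu G y < mu G x := mu_lt hx (hGpos x hx) h' le_rfl
      have h2 : mu H (y-1) ≤ mu H (x-1) := mu_mono_l (by omega)
      simp only [hrG] at hxy; omega
  have hHinj : Set.InjOn rH ↑H := by
    intro x hx y hy hxy
    simp only [Finset.mem_coe] at hx hy
    by_contra hne
    rcases Nat.lt_or_ge x y with h | h
    · have h1 : mu H x < mu H y := mu_lt hy (hHpos y hy) h le_rfl
      have h2 : mu G x ≤ mu G y := mu_mono_l (by omega)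
      simp only [hrH] at hxy; omega
    · have h' : y < x := by omega
      have h1 : mu H y < mu H x := mu_lt hx (hHpos x hx) h' le_rfl
      have h2 : mu G y ≤ mu G x := mu_mono_l (by omega)
      simp only [hrH] at hxy; omega
  refine ⟨G.image rG, H.image rH, ?_, ?_, Finset.card_image_of_injOn hGinj,
    Finset.card_image_of_injOn hHinj, ?_, ?_, ?_, ?_⟩
  · intro y hy
    obtain ⟨x, hx, rfl⟩ := Finset.mem_image.1 hy
    exact Finset.mem_Icc.2 ⟨hrG_pos x hx, hrG_bd x hx⟩
  · intro y hy
    obtain ⟨x, hx, rfl⟩ := Finset.mem_image.1 hy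
    exact Finset.mem_Icc.2 ⟨hrH_pos x hx, hrH_bd x hx⟩
  · -- mu G l ≤ mu (G.image rG) l
    intro l
    have hsub : (G ∩ Finset.Icc 1 l).image rG ⊆ (G.image rG) ∩ Finset.Icc 1 l := by
      intro y hy
      obtain ⟨x, hx, rfl⟩ := Finset.mem_image.1 hy
      obtain ⟨hx1, hx2⟩ := Finset.mem_inter.1 hx
      refine Finset.mem_inter.2 ⟨Finset.mem_image_of_mem _ hx1, Finset.mem_Icc.2
        ⟨hrG_pos x hx1, le_trans (hrG_le x hx1) (Finset.mem_Icc.1 hx2).2⟩⟩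
    calc mu G l = ((G ∩ Finset.Icc 1 l).image rG).card :=
          (Finset.card_image_of_injOn (hGinj.mono (by simp [Finset.coe_subset]))).symm
      _ ≤ _ := Finset.card_le_card hsub
  · intro l
    have hsub : (H ∩ Finset.Icc 1 l).image rH ⊆ (H.image rH) ∩ Finset.Icc 1 l := by
      intro y hy
      obtain ⟨x, hx, rfl⟩ := Finset.mem_image.1 hy
      obtain ⟨hx1, hx2⟩ := Finset.mem_inter.1 hx
      refine Finset.mem_inter.2 ⟨Finset.mem_image_of_mem _ hx1, Finset.mem_Icc.2
        ⟨hrH_pos x hx1, le_trans (hrH_le x hx1) (Finset.mem_Icc.1 hx2).2⟩⟩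
    calc mu H l = ((H ∩ Finset.Icc 1 l).image rH).card :=
          (Finset.card_image_of_injOn (hHinj.mono (by simp [Finset.coe_subset]))).symm
      _ ≤ _ := Finset.card_le_card hsub
  · -- disjoint
    rw [Finset.eq_empty_iff_forall_notMem]
    intro z hz
    obtain ⟨hz1, hz2⟩ := Finset.mem_inter.1 hz
    obtain ⟨x, hx, hxe⟩ := Finset.mem_image.1 hz1
    obtain ⟨y, hy, hye⟩ := Finset.mem_image.1 hz2
    have hxy : rG x = rH y := by rw [hxe, hye]
    simp only [hrG, hrH] at hxy
    rcases Nat.lt_or_ge y x with h | h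
    · have h1 : mu G y < mu G x := mu_lt hx (hGpos x hx) h le_rfl
      have h2 : mu H y ≤ mu H (x-1) := mu_mono_l (by omega)
      omega
    · -- x ≤ y
      have h1 : mu H (x-1) < mu H y := mu_lt hy (hHpos y hy)
        (by have := hGpos x hx; omega) le_rfl
      have h2 : mu G x ≤ mu G y := mu_mono_l h
      omega
  · -- card bound
    rcases Finset.eq_empty_or_nonempty (G ∪ H) with he | ⟨x, hx⟩
    · have h1 : G = ∅ := by
        rw [Finset.eq_empty_iff_forall_notMem]
        intro a ha; exact (Finset.eq_empty_iff_forall_notMem.1 he a) (Finset.mem_union_left _ ha)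
      have h2 : H = ∅ := by
        rw [Finset.eq_empty_iff_forall_notMem]
        intro a ha; exact (Finset.eq_empty_iff_forall_notMem.1 he a) (Finset.mem_union_right _ ha)
      simp [h1, h2]
    · -- use hmu at n
      have h1 : mu G n = G.card := by
        unfold mu
        congr 1
        exact Finset.inter_eq_left.2 hG
      have h2 : mu H n = H.card := by
        unfold mu
        congr 1
        exact Finset.inter_eq_left.2 hH
      have hn1 : 1 ≤ n := by
        rcases Finset.mem_union.1 hx with h | h
        · have := Finset.mem_Icc.1 (hG h); omega
        · have := Finset.mem_Icc.1 (hH h); omega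
      have := hmu n (Finset.mem_Icc.2 ⟨hn1, le_rfl⟩)
      omega

theorem stmt6 (n k : ℕ) (h4 : 4 ≤ 2 * k) (hn : 2 * k ≤ n) (G H : Finset ℕ)
    (hG : G ⊆ Finset.Icc 1 n) (hH : H ⊆ Finset.Icc 1 n)
    (hGc : G.card ≤ k) (hHc : H.card ≤ k) :
    (sInt n G H ↔ ∀ A ∈ Fam n k {G}, ∀ B ∈ Fam n k {H}, (A ∩ B).Nonempty) ∧
    ((∀ A ∈ Fam n k {G}, ∀ B ∈ Fam n k {H}, (A ∩ B).Nonempty) ↔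
      ∃ l ∈ Finset.Icc 1 n, l < mu G l + mu H l) := by
  have hGpos := pos_of_subset_Icc hG
  have hHpos := pos_of_subset_Icc hH
  -- P3 → sInt
  have hA : (∃ l ∈ Finset.Icc 1 n, l < mu G l + mu H l) → sInt n G H := by
    rintro ⟨l, _, hl⟩ G' H' hG'n hH'n ⟨hc1, hn1⟩ ⟨hc2, hn2⟩
    have m1 : ∀ m, mu G m ≤ mu G' m :=
      mu_transfer (pos_of_subset_Icc hG'n) hGpos (le_of_eq hc1.symm) hn1
    have m2 : ∀ m, mu H m ≤ mu H' m :=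
      mu_transfer (pos_of_subset_Icc hH'n) hHpos (le_of_eq hc2.symm) hn2
    exact inter_nonempty_of_mu (lt_of_lt_of_le hl (by have := m1 l; have := m2 l; omega))
  -- P3 → cross
  have hB : (∃ l ∈ Finset.Icc 1 n, l < mu G l + mu H l) →
      ∀ A ∈ Fam n k {G}, ∀ B ∈ Fam n k {H}, (A ∩ B).Nonempty := by
    rintro ⟨l, _, hl⟩ A ⟨hAn, hAc, G'', hG'', hprecA⟩ B ⟨hBn, hBc, H'', hH'', hprecB⟩
    rw [Set.mem_singleton_iff] at hG'' hH''
    rw [hG''] at hprecA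
    rw [hH''] at hprecB
    obtain ⟨hc1, hn1⟩ := hprecA
    obtain ⟨hc2, hn2⟩ := hprecB
    have m1 : ∀ m, mu G m ≤ mu A m := mu_transfer (pos_of_subset_Icc hAn) hGpos hc1 hn1
    have m2 : ∀ m, mu H m ≤ mu B m := mu_transfer (pos_of_subset_Icc hBn) hHpos hc2 hn2
    exact inter_nonempty_of_mu (lt_of_lt_of_le hl (by have := m1 l; have := m2 l; omega))
  -- ¬P3 → constructions
  have hC : ¬(∃ l ∈ Finset.Icc 1 n, l < mu G l + mu H l) →
      ¬ sInt n G H := by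
    intro hnp hs
    have hmu : ∀ l ∈ Finset.Icc 1 n, mu G l + mu H l ≤ l := by
      intro l hl
      by_contra hcon
      exact hnp ⟨l, hl, by omega⟩
    obtain ⟨G', H', hG's, hH's, hG'c, hH'c, m1, m2, hdisj, hcard⟩ := construct n G H hG hH hmu
    have hIccsub : Finset.Icc 1 (G.card + H.card) ⊆ Finset.Icc 1 n :=
      Finset.Icc_subset_Icc le_rfl hcard
    have hG'n : G' ⊆ Finset.Icc 1 n := hG's.trans hIccsub
    have hH'n : H' ⊆ Finset.Icc 1 n := hH's.trans hIccsub
    have e1 : eLE G' G := ⟨hG'c, nth_transfer (pos_of_subset_Icc hG'n) hGpos (le_of_eq hG'c.symm) m1⟩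
    have e2 : eLE H' H := ⟨hH'c, nth_transfer (pos_of_subset_Icc hH'n) hHpos (le_of_eq hH'c.symm) m2⟩
    obtain ⟨z, hz⟩ := hs G' H' hG'n hH'n e1 e2
    rw [hdisj] at hz
    exact absurd hz (Finset.notMem_empty z)
  have hD : ¬(∃ l ∈ Finset.Icc 1 n, l < mu G l + mu H l) →
      ¬ (∀ A ∈ Fam n k {G}, ∀ B ∈ Fam n k {H}, (A ∩ B).Nonempty) := by
    intro hnp hs
    have hmu : ∀ l ∈ Finset.Icc 1 n, mu G l + mu H l ≤ l := by
      intro l hl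
      by_contra hcon
      exact hnp ⟨l, hl, by omega⟩
    obtain ⟨G', H', hG's, hH's, hG'c, hH'c, m1, m2, hdisj, hcard⟩ := construct n G H hG hH hmu
    set p := G.card with hp
    set q := H.card with hq
    set A := G' ∪ Finset.Icc (p+q+1) (q+k) with hAdef
    set B := H' ∪ Finset.Icc (q+k+1) (2*k) with hBdef
    have hG'bd : ∀ x ∈ G', 1 ≤ x ∧ x ≤ p + q := fun x hx => Finset.mem_Icc.1 (hG's hx)
    have hH'bd : ∀ x ∈ H', 1 ≤ x ∧ x ≤ p + q := fun x hx => Finset.mem_Icc.1 (hH's hx)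
    have hAn : A ⊆ Finset.Icc 1 n := by
      intro x hx
      rcases Finset.mem_union.1 hx with h | h
      · have := hG'bd x h; exact Finset.mem_Icc.2 ⟨this.1, by omega⟩
      · have := Finset.mem_Icc.1 h
        exact Finset.mem_Icc.2 ⟨by omega, by omega⟩
    have hBn : B ⊆ Finset.Icc 1 n := by
      intro x hx
      rcases Finset.mem_union.1 hx with h | h
      · have := hH'bd x h; exact Finset.mem_Icc.2 ⟨this.1, by omega⟩
      · have := Finset.mem_Icc.1 h
        exact Finset.mem_Icc.2 ⟨by omega, by omega⟩
    have hAc : A.card = k := by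
      rw [hAdef, Finset.card_union_of_disjoint, hG'c, Nat.card_Icc]
      · omega
      · rw [Finset.disjoint_left]
        intro x hx hx2
        have := hG'bd x hx
        have := Finset.mem_Icc.1 hx2
        omega
    have hBc : B.card = k := by
      rw [hBdef, Finset.card_union_of_disjoint, hH'c, Nat.card_Icc]
      · omega
      · rw [Finset.disjoint_left]
        intro x hx hx2
        have := hH'bd x hx
        have := Finset.mem_Icc.1 hx2
        omega
    have hApre : preceq A G := by
      refine ⟨by omega, nth_transfer (pos_of_subset_Icc hAn) hGpos (by omega) ?_⟩
      intro l
      exact le_trans (m1 l) (mu_subset Finset.subset_union_left l)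
    have hBpre : preceq B H := by
      refine ⟨by omega, nth_transfer (pos_of_subset_Icc hBn) hHpos (by omega) ?_⟩
      intro l
      exact le_trans (m2 l) (mu_subset Finset.subset_union_left l)
    obtain ⟨z, hz⟩ := hs A ⟨hAn, hAc, G, Set.mem_singleton _, hApre⟩
      B ⟨hBn, hBc, H, Set.mem_singleton _, hBpre⟩
    obtain ⟨hzA, hzB⟩ := Finset.mem_inter.1 hz
    rcases Finset.mem_union.1 hzA with h1 | h1 <;> rcases Finset.mem_union.1 hzB with h2 | h2
    · have : z ∈ G' ∩ H' := Finset.mem_inter.2 ⟨h1, h2⟩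
      rw [hdisj] at this
      exact absurd this (Finset.notMem_empty z)
    · have := hG'bd z h1; have := Finset.mem_Icc.1 h2; omega
    · have := hH'bd z h2; have := Finset.mem_Icc.1 h1; omega
    · have := Finset.mem_Icc.1 h1; have := Finset.mem_Icc.1 h2; omega
  constructor
  · constructor
    · intro hs
      by_cases hp : ∃ l ∈ Finset.Icc 1 n, l < mu G l + mu H l
      · exact hB hp
      · exact absurd hs (hC hp)
    · intro hcr
      by_cases hp : ∃ l ∈ Finset.Icc 1 n, l < mu G l + mu H l
      · exact hA hp
      · exact absurd hcr (hD hp)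
  · constructor
    · intro hcr
      by_contra hp
      exact (hD hp) hcr
    · exact hB
end

section
/- Let n, k satisfy 4 ≤ 2k ≤ n and let G be a collection of subsets of [n], each of size at most k. Then F(n,k,G) is intersecting if and only if every pair G, H ∈ G (possibly equal) is strongly intersecting. -/
open Finset

lemma nth_def' (s : Finset ℕ) (i : ℕ) (h1 : 1 ≤ i) (h2 : i ≤ s.card) :
    nth s i = (s.sort (· ≤ ·))[i-1]'(by rw [Finset.length_sort]; omega) := by
  unfold nth
  exact List.getD_eq_getElem _ _ _

lemma nth_le_of_le_card (s : Finset ℕ) (x i : ℕ) (h1 : 1 ≤ i)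
    (h2 : i ≤ (s.filter (· ≤ x)).card) : nth s i ≤ x := by
  have hcard : i ≤ s.card := h2.trans (Finset.card_le_card (Finset.filter_subset _ _))
  have hlen : (s.sort (· ≤ ·)).length = s.card := Finset.length_sort _
  rw [nth_def' s i h1 hcard]
  by_contra hlt
  push_neg at hlt
  have hsub : s.filter (· ≤ x) ⊆ ((s.sort (· ≤ ·)).take (i-1)).toFinset := by
    intro y hy
    simp only [Finset.mem_filter] at hy
    obtain ⟨hys, hyx⟩ := hy
    have hmem : y ∈ s.sort (· ≤ ·) := (Finset.mem_sort _).2 hys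
    obtain ⟨j, hj, rfl⟩ := List.getElem_of_mem hmem
    rw [List.mem_toFinset]
    by_cases hji : j < i - 1
    · exact List.mem_take_iff_getElem.2 ⟨j, by omega, rfl⟩
    · exfalso
      push_neg at hji
      have hs := (s.pairwise_sort (· ≤ ·)).rel_get_of_le
        (a := ⟨i-1, by omega⟩) (b := ⟨j, hj⟩) (by simpa using hji)
      simp only [List.get_eq_getElem] at hs
      omega
  have h5 := Finset.card_le_card hsub
  have h3 := List.toFinset_card_le ((s.sort (· ≤ ·)).take (i-1))
  rw [List.length_take] at h3
  omega

lemma le_card_filter_nth (s : Finset ℕ) (i : ℕ) (h1 : 1 ≤ i) (h2 : i ≤ s.card) :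
    i ≤ (s.filter (· ≤ nth s i)).card := by
  have hlen : (s.sort (· ≤ ·)).length = s.card := Finset.length_sort _
  have hsub : (((s.sort (· ≤ ·)).take i)).toFinset ⊆ s.filter (· ≤ nth s i) := by
    intro y hy
    rw [List.mem_toFinset] at hy
    rw [Finset.mem_filter]
    refine ⟨(Finset.mem_sort _).1 (List.mem_of_mem_take hy), ?_⟩
    obtain ⟨j, hj, rfl⟩ := List.mem_take_iff_getElem.1 hy
    rw [nth_def' s i h1 h2]
    exact (s.pairwise_sort (· ≤ ·)).rel_get_of_le
      (a := ⟨j, by omega⟩) (b := ⟨i-1, by omega⟩) (by simp; omega)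
  have hcard : ((((s.sort (· ≤ ·)).take i)).toFinset).card = i := by
    rw [List.toFinset_card_of_nodup ((s.sort_nodup (· ≤ ·)).sublist (List.take_sublist _ _)),
      List.length_take]
    omega
  exact le_trans (le_of_eq hcard.symm) (Finset.card_le_card hsub)

lemma nth_mono (s t : Finset ℕ) (hst : s ⊆ t) (i : ℕ) (h1 : 1 ≤ i) (h2 : i ≤ s.card) :
    nth t i ≤ nth s i :=
  nth_le_of_le_card t (nth s i) i h1 ((le_card_filter_nth s i h1 h2).trans
    (Finset.card_le_card (Finset.filter_subset_filter _ hst)))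

lemma exists_initial (A : Finset ℕ) (m : ℕ) (hm : m ≤ A.card) :
    ∃ A', A' ⊆ A ∧ A'.card = m ∧ ∀ i, 1 ≤ i → i ≤ m → nth A' i = nth A i := by
  have hlen : (A.sort (· ≤ ·)).length = A.card := Finset.length_sort _
  have hnd : ((A.sort (· ≤ ·)).take m).Nodup :=
    (A.sort_nodup (· ≤ ·)).sublist (List.take_sublist _ _)
  refine ⟨((A.sort (· ≤ ·)).take m).toFinset, ?_, ?_, ?_⟩
  · intro y hy
    rw [List.mem_toFinset] at hy
    exact (Finset.mem_sort _).1 (List.mem_of_mem_take hy)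
  · rw [List.toFinset_card_of_nodup hnd, List.length_take]; omega
  · intro i h1 h2
    have hsort : (((A.sort (· ≤ ·)).take m).toFinset).sort (· ≤ ·) = (A.sort (· ≤ ·)).take m :=
      (List.toFinset_sort _ hnd).2 ((A.pairwise_sort (· ≤ ·)).sublist (List.take_sublist _ _))
    unfold nth
    rw [hsort, List.getD_eq_getElem _ _ (by rw [List.length_take]; omega),
      List.getD_eq_getElem _ _ (by omega), List.getElem_take]

theorem stmt8 (n k : ℕ) (h4 : 4 ≤ 2 * k) (hn : 2 * k ≤ n) (𝒢 : Set (Finset ℕ))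
    (h𝒢 : ∀ G ∈ 𝒢, G ⊆ Finset.Icc 1 n ∧ G.card ≤ k) :
    IsIntersecting (Fam n k 𝒢) ↔ ∀ G ∈ 𝒢, ∀ H ∈ 𝒢, sInt n G H := by
  constructor
  · intro hInt G hG H hH G' H' hG'n hH'n hG'le hH'le
    by_cases hne : (G' ∩ H').Nonempty
    · exact hne
    exfalso
    rw [Finset.not_nonempty_iff_eq_empty] at hne
    have hdisj : Disjoint G' H' := Finset.disjoint_iff_inter_eq_empty.2 hne
    obtain ⟨hGsub, hGk⟩ := h𝒢 G hG
    obtain ⟨hHsub, hHk⟩ := h𝒢 H hH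
    have hcG : G'.card ≤ k := hG'le.1 ▸ hGk
    have hcH : H'.card ≤ k := hH'le.1 ▸ hHk
    have hIcc : (Finset.Icc 1 n).card = n := by rw [Nat.card_Icc]; omega
    have hsubU : G' ∪ H' ⊆ Finset.Icc 1 n := Finset.union_subset hG'n hH'n
    have hTcard : n - (G'.card + H'.card) ≤ (Finset.Icc 1 n \ (G' ∪ H')).card := by
      have h1 := Finset.card_sdiff_of_subset hsubU
      have h2 : (G' ∪ H').card = G'.card + H'.card := Finset.card_union_of_disjoint hdisj
      omega
    obtain ⟨Aext, hAeT, hAecard⟩ := Finset.exists_subset_card_eq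
      (s := Finset.Icc 1 n \ (G' ∪ H')) (n := k - G'.card) (by omega)
    obtain ⟨Bext, hBeT, hBecard⟩ := Finset.exists_subset_card_eq
      (s := (Finset.Icc 1 n \ (G' ∪ H')) \ Aext) (n := k - H'.card) (by
        have h3 := Finset.card_sdiff_of_subset hAeT; omega)
    have hAeIcc : Aext ⊆ Finset.Icc 1 n := hAeT.trans (Finset.sdiff_subset)
    have hBeT' : Bext ⊆ Finset.Icc 1 n \ (G' ∪ H') := hBeT.trans (Finset.sdiff_subset)
    have hBeIcc : Bext ⊆ Finset.Icc 1 n := hBeT'.trans (Finset.sdiff_subset)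
    have hdGA : Disjoint G' Aext := by
      rw [Finset.disjoint_right]
      intro x hx
      have := (Finset.mem_sdiff.1 (hAeT hx)).2
      exact fun hxG => this (Finset.mem_union_left _ hxG)
    have hdHB : Disjoint H' Bext := by
      rw [Finset.disjoint_right]
      intro x hx
      have := (Finset.mem_sdiff.1 (hBeT' hx)).2
      exact fun hxH => this (Finset.mem_union_right _ hxH)
    have hcardA : (G' ∪ Aext).card = k := by
      rw [Finset.card_union_of_disjoint hdGA]; omega
    have hcardB : (H' ∪ Bext).card = k := by
      rw [Finset.card_union_of_disjoint hdHB]; omega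
    have hmemA : (G' ∪ Aext) ∈ Fam n k 𝒢 := by
      refine ⟨Finset.union_subset hG'n hAeIcc, hcardA, G, hG, ?_, ?_⟩
      · rw [hcardA, ← hG'le.1]; exact hcG
      · intro i h1 h2
        have h2' : i ≤ G'.card := by rw [hG'le.1]; exact h2
        exact le_trans (nth_mono G' (G' ∪ Aext) Finset.subset_union_left i h1 h2')
          (hG'le.2 i h1 h2)
    have hmemB : (H' ∪ Bext) ∈ Fam n k 𝒢 := by
      refine ⟨Finset.union_subset hH'n hBeIcc, hcardB, H, hH, ?_, ?_⟩
      · rw [hcardB, ← hH'le.1]; exact hcH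
      · intro i h1 h2
        have h2' : i ≤ H'.card := by rw [hH'le.1]; exact h2
        exact le_trans (nth_mono H' (H' ∪ Bext) Finset.subset_union_left i h1 h2')
          (hH'le.2 i h1 h2)
    obtain ⟨x, hx⟩ := hInt _ hmemA _ hmemB
    rw [Finset.mem_inter, Finset.mem_union, Finset.mem_union] at hx
    obtain ⟨hx1 | hx1, hx2 | hx2⟩ := hx
    · exact Finset.notMem_empty x (hne ▸ Finset.mem_inter.2 ⟨hx1, hx2⟩)
    · exact (Finset.mem_sdiff.1 (hBeT' hx2)).2 (Finset.mem_union_left _ hx1)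
    · exact (Finset.mem_sdiff.1 (hAeT hx1)).2 (Finset.mem_union_right _ hx2)
    · exact (Finset.mem_sdiff.1 (hBeT hx2)).2 hx1
  · intro hsi A hA B hB
    obtain ⟨hAsub, hAcard, G, hG, hpGA⟩ := hA
    obtain ⟨hBsub, hBcard, H, hH, hpHB⟩ := hB
    obtain ⟨A', hA'A, hA'card, hA'nth⟩ := exists_initial A G.card hpGA.1
    obtain ⟨B', hB'B, hB'card, hB'nth⟩ := exists_initial B H.card hpHB.1
    obtain ⟨x, hx⟩ := hsi G hG H hH A' B'
      (hA'A.trans hAsub) (hB'B.trans hBsub)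
      ⟨hA'card, fun i h1 h2 => by rw [hA'nth i h1 h2]; exact hpGA.2 i h1 h2⟩
      ⟨hB'card, fun i h1 h2 => by rw [hB'nth i h1 h2]; exact hpHB.2 i h1 h2⟩
    rw [Finset.mem_inter] at hx
    exact ⟨x, Finset.mem_inter.2 ⟨hA'A hx.1, hB'B hx.2⟩⟩
end

section
/- Let A be a left-compressed intersecting family of k-subsets of [n] with 4 ≤ 2k ≤ n. Then for any A = {a_1 < ... < a_k} and B = {b_1 < ... < b_k} in A, there exist indices 1 ≤ i, j ≤ k such that i + j > max{a_i, b_j}. -/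
open Finset

lemma nth_mem_s15 (s : Finset ℕ) {j : ℕ} (h1 : 1 ≤ j) (h2 : j ≤ s.card) : nth s j ∈ s := by
  have hp : j - 1 < (s.sort (· ≤ ·)).length := by
    rw [Finset.length_sort]; omega
  rw [nth, List.getD_eq_getElem _ _ hp]
  rw [← Finset.mem_sort (· ≤ ·)]
  exact List.getElem_mem _

lemma nth_le_iff_s15 (s : Finset ℕ) {j m : ℕ} (h1 : 1 ≤ j) (h2 : j ≤ s.card) :
    nth s j ≤ m ↔ j ≤ (s.filter (· ≤ m)).card := by
  set l := s.sort (· ≤ ·) with hl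
  have hlen : l.length = s.card := Finset.length_sort _
  have hp : j - 1 < l.length := by omega
  have hnth : nth s j = l.get ⟨j - 1, hp⟩ := List.getD_eq_get _ _ ⟨j - 1, hp⟩
  constructor
  · intro h
    have hsub : (l.take j).toFinset ⊆ s.filter (· ≤ m) := by
      intro x hx
      rw [List.mem_toFinset] at hx
      obtain ⟨q, hq, rfl⟩ := List.mem_take_iff_getElem.mp hx
      have hq' : q < l.length := lt_of_lt_of_le hq (min_le_right _ _)
      rw [Finset.mem_filter]
      refine ⟨?_, ?_⟩
      · rw [← Finset.mem_sort (· ≤ ·)]; exact List.getElem_mem _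
      · have hqj : q ≤ j - 1 := by
          have := lt_of_lt_of_le hq (min_le_left _ _); omega
        have h2' : l.get ⟨q, hq'⟩ ≤ l.get ⟨j - 1, hp⟩ :=
          (Finset.pairwise_sort s (· ≤ ·)).rel_get_of_le (by simpa using hqj)
        simp only [List.get_eq_getElem] at h2'
        rw [hnth, List.get_eq_getElem] at h
        exact le_trans h2' h
    calc j = (l.take j).toFinset.card := by
            rw [List.toFinset_card_of_nodup
              ((Finset.sort_nodup _ _).sublist (List.take_sublist _ _))]
            rw [List.length_take]; simp only [← hl]; omega
      _ ≤ _ := Finset.card_le_card hsub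
  · intro h
    by_contra hc
    push_neg at hc
    have hsub : s.filter (· ≤ m) ⊆ (l.take (j - 1)).toFinset := by
      intro x hx
      rw [Finset.mem_filter] at hx
      have hxl : x ∈ l := (Finset.mem_sort _).mpr hx.1
      obtain ⟨q, hq, rfl⟩ := List.mem_iff_getElem.mp hxl
      have hqlt : q < j - 1 := by
        by_contra hge
        push_neg at hge
        have : l.get ⟨j - 1, hp⟩ ≤ l.get ⟨q, hq⟩ :=
          (Finset.pairwise_sort s (· ≤ ·)).rel_get_of_le (by simpa using hge)
        simp only [List.get_eq_getElem] at this
        rw [hnth, List.get_eq_getElem] at hc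
        exact absurd (le_trans this hx.2) (not_le.mpr hc)
      rw [List.mem_toFinset]
      exact List.mem_take_iff_getElem.mpr ⟨q, by omega, rfl⟩
    have := Finset.card_le_card hsub
    have h3 : (l.take (j - 1)).toFinset.card ≤ j - 1 :=
      le_trans (List.toFinset_card_le _) (by rw [List.length_take]; omega)
    omega

lemma nth_ge {n : ℕ} (s : Finset ℕ) (hs : s ⊆ Finset.Icc 1 n) {j : ℕ}
    (h1 : 1 ≤ j) (h2 : j ≤ s.card) : j ≤ nth s j := by
  by_contra hc
  push_neg at hc
  have h3 : nth s j ≤ j - 1 := by omega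
  have := (nth_le_iff_s15 s h1 h2).mp h3
  have hsub : s.filter (· ≤ j - 1) ⊆ Finset.Icc 1 (j - 1) := by
    intro x hx
    rw [Finset.mem_filter] at hx
    have := hs hx.1
    rw [Finset.mem_Icc] at *
    omega
  have := Finset.card_le_card hsub
  rw [Nat.card_Icc] at this
  omega


theorem stmt15 (n k : ℕ) (h4 : 4 ≤ 2 * k) (hn : 2 * k ≤ n) (𝒜 : Set (Finset ℕ))
    (h𝒜 : ∀ A ∈ 𝒜, A ⊆ Finset.Icc 1 n ∧ A.card = k)
    (hlc : ∀ A ∈ 𝒜, ∀ B, B ⊆ Finset.Icc 1 n → B.card = k → eLE B A → B ∈ 𝒜)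
    (hint : IsIntersecting 𝒜) :
    ∀ A ∈ 𝒜, ∀ B ∈ 𝒜, ∃ i j, 1 ≤ i ∧ i ≤ k ∧ 1 ≤ j ∧ j ≤ k ∧
      max (nth A i) (nth B j) < i + j := by 
  intro A hA B hB
  by_contra hcon
  push_neg at hcon
  obtain ⟨hAsub, hAcard⟩ := h𝒜 A hA
  obtain ⟨hBsub, hBcard⟩ := h𝒜 B hB
  -- the complement of A in [n]
  set C : Finset ℕ := Finset.Icc 1 n \ A with hC
  have hCsub : C ⊆ Finset.Icc 1 n := Finset.sdiff_subset
  have hCcard : C.card = n - k := by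
    rw [hC, Finset.card_sdiff_of_subset hAsub, Nat.card_Icc, hAcard]
    omega
  have hkC : k ≤ C.card := by omega
  -- key bound : nth C j ≤ nth B j
  have hkey : ∀ j, 1 ≤ j → j ≤ k → nth C j ≤ nth B j := by
    intro j hj1 hjk
    have hjB : j ≤ B.card := by omega
    set m := nth B j with hm
    have hmB : m ∈ B := nth_mem_s15 B hj1 hjB
    have hmn : m ≤ n := by
      have := hBsub hmB
      rw [Finset.mem_Icc] at this
      exact this.2
    have hjm : j ≤ m := nth_ge B hBsub hj1 hjB
    set t := (A.filter (· ≤ m)).card with ht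
    -- card of C.filter (· ≤ m) is m - t
    have hCfilter : C.filter (· ≤ m) = Finset.Icc 1 m \ A := by
      ext x
      simp only [hC, Finset.mem_filter, Finset.mem_sdiff, Finset.mem_Icc]
      constructor
      · rintro ⟨⟨⟨hx1, _⟩, hxA⟩, hxm⟩
        exact ⟨⟨hx1, hxm⟩, hxA⟩
      · rintro ⟨⟨hx1, hxm⟩, hxA⟩
        exact ⟨⟨⟨hx1, le_trans hxm hmn⟩, hxA⟩, hxm⟩
    have hinter : Finset.Icc 1 m ∩ A = A.filter (· ≤ m) := by
      ext x
      simp only [Finset.mem_inter, Finset.mem_filter, Finset.mem_Icc]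
      constructor
      · rintro ⟨⟨_, hxm⟩, hxA⟩; exact ⟨hxA, hxm⟩
      · rintro ⟨hxA, hxm⟩
        have := hAsub hxA
        rw [Finset.mem_Icc] at this
        exact ⟨⟨this.1, hxm⟩, hxA⟩
    have hcard : (C.filter (· ≤ m)).card + t = m := by
      rw [hCfilter, ht, ← hinter]
      have := Finset.card_sdiff_add_card_inter (Finset.Icc 1 m) A
      rw [Nat.card_Icc] at this
      omega
    have htk : t ≤ k := by
      rw [ht, ← hAcard]
      exact Finset.card_le_card (Finset.filter_subset _ _)
    have hgoal : j ≤ (C.filter (· ≤ m)).card := by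
      rcases Nat.eq_zero_or_pos t with h0 | hpos
      · omega
      · have hAt : nth A t ≤ m := by
          rw [nth_le_iff_s15 A hpos (by omega : t ≤ A.card)]
        have h5 := hcon t j hpos htk hj1 hjk
        have hmax : max (nth A t) (nth B j) ≤ m := max_le hAt (le_of_eq hm.symm)
        omega
    exact (nth_le_iff_s15 C hj1 (by omega)).mpr hgoal
  -- the set D : the k smallest elements of C
  set l : List ℕ := C.sort (· ≤ ·) with hl
  have hlen : l.length = C.card := Finset.length_sort _
  set D : Finset ℕ := (l.take k).toFinset with hD
  have htake_nodup : (l.take k).Nodup := (Finset.sort_nodup _ _).sublist (List.take_sublist _ _)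
  have hDcard : D.card = k := by
    rw [hD, List.toFinset_card_of_nodup htake_nodup, List.length_take]
    omega
  have hDsubC : D ⊆ C := by
    intro x hx
    rw [hD, List.mem_toFinset] at hx
    have : x ∈ l := List.mem_of_mem_take hx
    rw [hl, Finset.mem_sort] at this
    exact this
  have hDsort : D.sort (· ≤ ·) = l.take k :=
    (List.toFinset_sort _ htake_nodup).mpr ((Finset.pairwise_sort _ _).sublist (List.take_sublist _ _))
  have hDnth : ∀ j, 1 ≤ j → j ≤ k → nth D j = nth C j := by
    intro j hj1 hjk
    have hj' : j - 1 < (l.take k).length := by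
      rw [List.length_take]; omega
    have hj'' : j - 1 < l.length := by omega
    rw [nth, nth, hDsort, ← hl, List.getD_eq_getElem _ _ hj', List.getD_eq_getElem _ _ hj'']
    exact (List.getElem_take' hj'' (by omega)).symm
  -- D belongs to the family
  have hDmem : D ∈ 𝒜 := by
    apply hlc B hB D (le_trans hDsubC hCsub) hDcard
    refine ⟨by rw [hDcard, hBcard], fun j hj1 hj2 => ?_⟩
    rw [hBcard] at hj2
    rw [hDnth j hj1 hj2]
    exact hkey j hj1 hj2
  -- contradiction with intersecting
  obtain ⟨x, hx⟩ := hint A hA D hDmem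
  rw [Finset.mem_inter] at hx
  have := hDsubC hx.2
  rw [hC, Finset.mem_sdiff] at this
  exact this.2 hx.1
end
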